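/- arXiv:2212.12756 — 4 statements merged into one kernel-verified Lean document; each statement's English description precedes it below -/
import Mathlib

section
/- (Observation 2) Let f be a Boolean network on n+2 components with f_{n+1}(x) = φ(x restricted to the first n coordinates) ∧ ¬ x_{n+2} and f_{n+2}(x) = x_{n+1} ∧ ¬ x_{n+2}, for some Boolean function φ : B^n → B. If a trap space T of f contains a configuration z with φ(z restricted to the first n coordinates) = true, then the last two coordinates of T are free: T (n+1) = none and T (n+2) = none (indices written 1-based as n+1, n+2). -/
def vset {n : ℕ} (h : Fin n → Option Bool) : Set (Fin n → Bool) :=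
  { x | ∀ i b, h i = some b → x i = b }

def IsTrap {n : ℕ} (f : (Fin n → Bool) → (Fin n → Bool)) (h : Fin n → Option Bool) : Prop :=
  ∀ x ∈ vset h, f x ∈ vset h

def IsMinTrap {n : ℕ} (f : (Fin n → Bool) → (Fin n → Bool)) (h : Fin n → Option Bool) : Prop :=
  IsTrap f h ∧ ∀ h' : Fin n → Option Bool, IsTrap f h' → ¬ (vset h' ⊂ vset h)

theorem stmt_12 {n : ℕ} (f : (Fin (n+2) → Bool) → (Fin (n+2) → Bool))
    (φ : (Fin n → Bool) → Bool)
    (i₁ : Fin (n+2)) (i₂ : Fin (n+2)) (hi₁ : (i₁ : ℕ) = n) (hi₂ : (i₂ : ℕ) = n + 1)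
    (hf₁ : ∀ x, f x i₁ = (φ (fun i : Fin n => x (Fin.castAdd 2 i)) && ! x i₂))
    (hf₂ : ∀ x, f x i₂ = (x i₁ && ! x i₂))
    (T : Fin (n+2) → Option Bool) (hT : IsTrap f T)
    (z : Fin (n+2) → Bool) (hz : z ∈ vset T)
    (hφ : φ (fun i : Fin n => z (Fin.castAdd 2 i)) = true) :
    T i₁ = none ∧ T i₂ = none := by
  have hne : i₁ ≠ i₂ := by
    intro h
    rw [h, hi₂] at hi₁
    omega
  -- First: T i₂ = none
  have h2 : T i₂ = none := by
    cases hc : T i₂ with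
    | none => rfl
    | some c =>
      exfalso
      have hz2 : z i₂ = c := hz i₂ c hc
      have hfz : f z ∈ vset T := hT z hz
      have hffz : f (f z) ∈ vset T := hT _ hfz
      have e1 : f z i₂ = c := hfz i₂ c hc
      have e1' := e1
      rw [hf₂, hz2] at e1'
      have e2 := hffz i₂ c hc
      rw [hf₂, e1] at e2
      have e3 : f z i₁ = (true && !c) := by rw [hf₁, hφ, hz2]
      cases c <;> simp_all
  refine ⟨?_, h2⟩
  cases hd : T i₁ with
  | none => rfl
  | some d =>
    exfalso
    set x : Fin (n+2) → Bool := Function.update z i₂ false with hxdef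
    have hxmem : x ∈ vset T := by
      intro i b hib
      by_cases hii : i = i₂
      · subst hii; rw [h2] at hib; exact absurd hib (by simp)
      · rw [hxdef, Function.update_of_ne hii]; exact hz i b hib
    have hx1 : x i₁ = d := by
      rw [hxdef, Function.update_of_ne hne]; exact hz i₁ d hd
    have hx2 : x i₂ = false := by rw [hxdef, Function.update_self]
    have hxφ : φ (fun i : Fin n => x (Fin.castAdd 2 i)) = true := by
      rw [← hφ]
      congr 1
      funext i
      rw [hxdef, Function.update_of_ne]
      intro h
      have : ((Fin.castAdd 2 i : Fin (n+2)) : ℕ) = (i₂ : ℕ) := by rw [h]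
      simp [Fin.coe_castAdd, hi₂] at this
      omega
    have hfx : f x ∈ vset T := hT x hxmem
    have e4 : f x i₁ = true := by rw [hf₁, hxφ, hx2]; rfl
    have hdtrue : d = true := by rw [← hfx i₁ d hd]; exact e4
    have e5 : f x i₂ = true := by rw [hf₂, hx1, hx2, hdtrue]; rfl
    have hffx : f (f x) ∈ vset T := hT _ hfx
    have e6 : f (f x) i₁ = true := by
      rw [hffx i₁ d hd, hdtrue]
    rw [hf₁, e5] at e6
    simp at e6
end

section
/- (Observation 3) Let f be a Boolean network on n+2 components such that for every i among the first n coordinates, f_i(x) = (φ'(x restricted to first n coordinates) ∧ ¬ x_{n+1}) ∨ x_{n+2}, for some Boolean function φ' : B^n → B. If T is a trap space of f whose last two coordinates are free (T(n+1) = T(n+2) = none), then all coordinates of T are free: T i = none for all i. -/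
theorem stmt_13 {n : ℕ} (f : (Fin (n+2) → Bool) → (Fin (n+2) → Bool))
    (φ' : (Fin n → Bool) → Bool)
    (i₁ : Fin (n+2)) (i₂ : Fin (n+2)) (hi₁ : (i₁ : ℕ) = n) (hi₂ : (i₂ : ℕ) = n + 1)
    (hf : ∀ (i : Fin n) (x : Fin (n+2) → Bool),
      f x (Fin.castAdd 2 i) =
        ((φ' (fun j : Fin n => x (Fin.castAdd 2 j)) && ! x i₁) || x i₂))
    (T : Fin (n+2) → Option Bool) (hT : IsTrap f T)
    (h₁ : T i₁ = none) (h₂ : T i₂ = none) :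
    ∀ i, T i = none := by
  intro i
  by_cases e1 : i = i₁
  · rw [e1]; exact h₁
  by_cases e2 : i = i₂
  · rw [e2]; exact h₂
  -- i is among the first n coordinates
  have hin : (i : ℕ) < n := by
    have := i.isLt
    have hne1 : (i : ℕ) ≠ n := fun h => e1 (Fin.ext (h.trans hi₁.symm))
    have hne2 : (i : ℕ) ≠ n + 1 := fun h => e2 (Fin.ext (h.trans hi₂.symm))
    omega
  set j : Fin n := ⟨i, hin⟩ with hj
  have hij : Fin.castAdd 2 j = i := Fin.ext rfl
  by_contra hsome
  obtain ⟨b, hb⟩ := Option.ne_none_iff_exists'.mp hsome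
  -- helper: construct a vertex in vset T with prescribed values at i₁ i₂
  have key : ∀ b₁ b₂ : Bool, (fun k => if k = i₁ then b₁ else if k = i₂ then b₂ else (T k).getD true) ∈ vset T := by
    intro b₁ b₂ k c hc
    simp only
    have hk1 : k ≠ i₁ := by rintro rfl; rw [h₁] at hc; exact absurd hc.symm (Option.some_ne_none c)
    have hk2 : k ≠ i₂ := by rintro rfl; rw [h₂] at hc; exact absurd hc.symm (Option.some_ne_none c)
    rw [if_neg hk1, if_neg hk2, hc]; rfl
  have ne12 : i₁ ≠ i₂ := by
    intro h; have := congrArg (Fin.val) h; omega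
  -- first vertex: x i₁ = true, x i₂ = false ⇒ f x i = false
  have hfalse : b = false := by
    set x : Fin (n+2) → Bool := fun k => if k = i₁ then true else if k = i₂ then false else (T k).getD true with hx
    have hx1 : x i₁ = true := by simp [hx]
    have hx2 : x i₂ = false := by simp [hx, ne12.symm]
    have hmem := hT x (key true false)
    have := hmem i b hb
    rw [← hij] at this
    rw [hf j x, hx1, hx2] at this
    simpa using this.symm
  -- second vertex: x i₂ = true ⇒ f x i = true
  have htrue : b = true := by
    set x : Fin (n+2) → Bool := fun k => if k = i₁ then true else if k = i₂ then true else (T k).getD true with hx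
    have hx2 : x i₂ = true := by simp [hx]
    have hmem := hT x (key true true)
    have := hmem i b hb
    rw [← hij] at this
    rw [hf j x, hx2] at this
    simpa using this.symm
  simp [hfalse] at htrue
end

section
/- (Direction of Theorem 1 reduction) Let φ : B^{n} → B and define the Boolean network f on n+1 components by f_i(x) = ¬ x_i for i ≤ n and f_{n+1}(x) = φ(x restricted to first n coordinates). Let h be the sub-hypercube with the first n coordinates free and the last coordinate fixed to true. Then h is a trap space of f if and only if φ is a tautology (φ y = true for all y : Fin n → Bool). -/
theorem stmt_16 {n : ℕ} (f : (Fin (n+1) → Bool) → (Fin (n+1) → Bool))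
    (φ : (Fin n → Bool) → Bool)
    (hf₁ : ∀ (i : Fin n) (x : Fin (n+1) → Bool),
      f x (Fin.castSucc i) = ! x (Fin.castSucc i))
    (hf₂ : ∀ x : Fin (n+1) → Bool,
      f x (Fin.last n) = φ (fun i : Fin n => x (Fin.castSucc i))) :
    IsTrap f (fun i => if i = Fin.last n then some true else none) ↔
      ∀ y : Fin n → Bool, φ y = true := by
  constructor
  · intro ht y
    set x : Fin (n+1) → Bool := Fin.snoc y true with hx
    have hxv : x ∈ vset (fun i => if i = Fin.last n then some true else none) := by
      intro i b hb
      by_cases hi : i = Fin.last n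
      · simp [hi] at hb
        subst hi; simp [hx, Fin.snoc, hb.symm]
      · simp [hi] at hb
    have := ht x hxv (Fin.last n) true (by simp)
    rw [hf₂] at this
    convert this using 2
    funext i
    simp [hx, Fin.snoc]
  · intro hφ x hx i b hb
    by_cases hi : i = Fin.last n
    · simp [hi] at hb
      subst hi hb
      rw [hf₂]; exact hφ _
    · simp [hi] at hb
end

section
/- (Lemma 1, forward direction, specialized) Let φ : B^{n₂} → B and n₁ ≤ n₂. Define the Boolean network f on n₂+2 components by: f_j(x) = (x_j ∧ ¬ x_{n₂+1}) ∨ x_{n₂+2} for j ≤ n₁; f_j(x) = ¬ x_j for n₁ < j ≤ n₂; f_{n₂+1}(x) = φ(x restricted to first n₂ coordinates) ∧ ¬ x_{n₂+2}; f_{n₂+2}(x) = x_{n₂+1} ∧ ¬ x_{n₂+2}. If for all assignments of the first n₁ variables there exist values of the remaining n₂ − n₁ variables making φ true, then the only trap space of f is the fully free sub-hypercube (every coordinate none). -/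
theorem stmt_17 {n₁ n₂ : ℕ} (hle : n₁ ≤ n₂)
    (f : (Fin (n₂+2) → Bool) → (Fin (n₂+2) → Bool))
    (φ : (Fin n₂ → Bool) → Bool)
    (i₁ : Fin (n₂+2)) (i₂ : Fin (n₂+2)) (hi₁ : (i₁ : ℕ) = n₂) (hi₂ : (i₂ : ℕ) = n₂ + 1)
    (hfa : ∀ (j : Fin n₂), (j : ℕ) < n₁ → ∀ x,
      f x (Fin.castAdd 2 j) = ((x (Fin.castAdd 2 j) && ! x i₁) || x i₂))
    (hfb : ∀ (j : Fin n₂), n₁ ≤ (j : ℕ) → ∀ x,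
      f x (Fin.castAdd 2 j) = ! x (Fin.castAdd 2 j))
    (hf₁ : ∀ x, f x i₁ = (φ (fun i : Fin n₂ => x (Fin.castAdd 2 i)) && ! x i₂))
    (hf₂ : ∀ x, f x i₂ = (x i₁ && ! x i₂))
    (hsat : ∀ a : Fin n₁ → Bool, ∃ b : Fin (n₂ - n₁) → Bool,
      φ (fun i => if hi : (i : ℕ) < n₁ then a ⟨i, hi⟩
                  else b ⟨(i : ℕ) - n₁, by omega⟩) = true) :
    ∀ h : Fin (n₂+2) → Option Bool, IsTrap f h → ∀ i, h i = none := by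
  intro h htrap
  -- basic index facts
  have hX : ∀ g : Fin (n₂+2) → Bool, (fun i => (h i).getD (g i)) ∈ vset h := by
    intro g i b hib
    simp [vset, hib]
  -- Step A: free-negation coordinates are none
  have stepA : ∀ j : Fin n₂, n₁ ≤ (j : ℕ) → h (Fin.castAdd 2 j) = none := by
    intro j hj
    cases hc : h (Fin.castAdd 2 j) with
    | none => rfl
    | some b =>
      exfalso
      have h1 := htrap _ (hX (fun _ => false)) _ b hc
      rw [hfb j hj] at h1
      simp only [hc, Option.getD_some] at h1
      cases b <;> simp_all
  -- i₂ cannot be fixed to true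
  have hB' : h i₂ ≠ some true := by
    intro hc
    have h1 := htrap _ (hX (fun _ => true)) _ true hc
    rw [hf₂] at h1
    simp only [hc, Option.getD_some] at h1
    simp at h1
  -- i₁ cannot be fixed to false
  have hC : h i₁ ≠ some false := by
    intro hc
    set a : Fin n₁ → Bool :=
      fun j => (h (Fin.castAdd 2 ⟨(j : ℕ), lt_of_lt_of_le j.isLt hle⟩)).getD false with ha
    obtain ⟨bb, hbb⟩ := hsat a
    set g : Fin (n₂+2) → Bool := fun i =>
      if hlt : (i : ℕ) < n₁ then a ⟨i, hlt⟩
      else if hlt2 : (i : ℕ) < n₂ then bb ⟨(i : ℕ) - n₁, by omega⟩ else false with hg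
    set x : Fin (n₂+2) → Bool := fun i => (h i).getD (g i) with hx
    have hxφ : (fun i : Fin n₂ => x (Fin.castAdd 2 i)) =
        (fun i : Fin n₂ => if hi : (i : ℕ) < n₁ then a ⟨i, hi⟩
                  else bb ⟨(i : ℕ) - n₁, by omega⟩) := by
      funext i
      by_cases hi : (i : ℕ) < n₁
      · have hcoe : ((Fin.castAdd 2 i : Fin (n₂+2)) : ℕ) = (i : ℕ) := rfl
        have hgi : g (Fin.castAdd 2 i) = a ⟨(i : ℕ), hi⟩ := by
          simp [hg, hcoe, hi]
        have hai : a ⟨(i : ℕ), hi⟩ = (h (Fin.castAdd 2 i)).getD false := by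
          rw [ha]
        cases hv : h (Fin.castAdd 2 i) with
        | none => simp [hx, hv, hgi, hai, hi]
        | some v => simp [hx, hv, hai, hi]
      · have hnone : h (Fin.castAdd 2 i) = none := stepA i (le_of_not_gt hi)
        have hcoe : ((Fin.castAdd 2 i : Fin (n₂+2)) : ℕ) = (i : ℕ) := rfl
        simp [hx, hnone, hg, hcoe, hi, i.isLt]
    have hxi₂ : x i₂ = false := by
      cases hv : h i₂ with
      | none =>
        have : ¬ ((i₂ : ℕ) < n₁) := by omega
        have h2 : ¬ ((i₂ : ℕ) < n₂) := by omega
        simp [hx, hv, hg, this, h2]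
      | some v =>
        cases v with
        | true => exact absurd hv hB'
        | false => simp [hx, hv]
    have h1 : ((φ fun i : Fin n₂ => x (Fin.castAdd 2 i)) && ! x i₂) = false := by
      have h0 := htrap _ (hX g) _ false hc
      rw [hf₁] at h0
      exact h0
    rw [hxφ, hbb, hxi₂] at h1
    simp at h1
  -- i₂ cannot be fixed to false
  have hB2 : h i₂ ≠ some false := by
    intro hc
    have h1 := htrap _ (hX (fun _ => true)) _ false hc
    rw [hf₂] at h1
    simp only [hc, Option.getD_some] at h1
    have hxi₁ : (h i₁).getD true = true := by
      cases hv : h i₁ with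
      | none => rfl
      | some v =>
        cases v with
        | false => exact absurd hv hC
        | true => rfl
    rw [hxi₁] at h1
    simp at h1
  have hi₂none : h i₂ = none := by
    cases hv : h i₂ with
    | none => rfl
    | some v => cases v with
      | true => exact absurd hv hB'
      | false => exact absurd hv hB2
  -- i₁ cannot be fixed to true
  have hCt : h i₁ ≠ some true := by
    intro hc
    have h1 := htrap _ (hX (fun _ => true)) _ true hc
    rw [hf₁] at h1
    have hxi₂ : (h i₂).getD true = true := by simp [hi₂none]
    rw [hxi₂] at h1
    simp at h1
  have hi₁none : h i₁ = none := by
    cases hv : h i₁ with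
    | none => rfl
    | some v => cases v with
      | true => exact absurd hv hCt
      | false => exact absurd hv hC
  -- Step D: first n₁ coordinates are none
  have stepD : ∀ j : Fin n₂, (j : ℕ) < n₁ → h (Fin.castAdd 2 j) = none := by
    intro j hj
    cases hc : h (Fin.castAdd 2 j) with
    | none => rfl
    | some b =>
      exfalso
      cases b with
      | false =>
        have h1 := htrap _ (hX (fun _ => true)) _ false hc
        rw [hfa j hj] at h1
        have hxi₂ : (h i₂).getD true = true := by simp [hi₂none]
        rw [hxi₂] at h1
        simp at h1
      | true =>
        set g : Fin (n₂+2) → Bool := fun i => decide ((i : ℕ) ≤ n₂) with hg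
        have h1 := htrap _ (hX g) _ true hc
        rw [hfa j hj] at h1
        have hxi₁ : (h i₁).getD (g i₁) = true := by
          simp [hi₁none, hg, hi₁]
        have hxi₂ : (h i₂).getD (g i₂) = false := by
          simp [hi₂none, hg, hi₂]
        rw [hxi₁, hxi₂] at h1
        simp at h1
  -- conclude
  intro i
  by_cases hv : (i : ℕ) < n₂
  · have he : i = Fin.castAdd 2 ⟨(i : ℕ), hv⟩ := by
      apply Fin.ext; rfl
    rw [he]
    by_cases h1 : (i : ℕ) < n₁
    · exact stepD ⟨(i : ℕ), hv⟩ h1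
    · exact stepA ⟨(i : ℕ), hv⟩ (le_of_not_gt h1)
  · have : (i : ℕ) = n₂ ∨ (i : ℕ) = n₂ + 1 := by
      have := i.isLt; omega
    rcases this with e | e
    · have : i = i₁ := Fin.ext (by rw [e, hi₁])
      rw [this]; exact hi₁none
    · have : i = i₂ := Fin.ext (by rw [e, hi₂])
      rw [this]; exact hi₂none
end
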